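/- For all integers n, k, t ≥ 0 with k ≤ n, the identity C(n+t-1, n)·C(n, k) + C(n+t-1, n-1)·C(n-1, k) = C(n+t-k, t)·C(n+t-1, k) holds, where C(a,b) denotes the binomial coefficient. -/

import Mathlib

/-- Binomial coefficient for integer arguments: `C a b = a! / (b! (a-b)!)`
for `0 ≤ b ≤ a`, and `0` otherwise. -/
def intChoose (a b : ℤ) : ℤ :=
  if 0 ≤ b ∧ b ≤ a then (a.toNat.choose b.toNat : ℤ) else 0

lemma intChoose_of_le {a b : ℤ} (h1 : 0 ≤ b) (h2 : b ≤ a) :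
    intChoose a b = (a.toNat.choose b.toNat : ℤ) := by
  simp [intChoose, h1, h2]

lemma intChoose_of_not {a b : ℤ} (h : ¬ (0 ≤ b ∧ b ≤ a)) : intChoose a b = 0 := by
  simp [intChoose, h]

lemma nat_binomial_identity (n k t : ℕ) (hk : k ≤ n) (hn : 1 ≤ n) (ht : 1 ≤ t) :
    (n + t - 1).choose n * n.choose k + (n + t - 1).choose (n - 1) * (n - 1).choose k
      = (n + t - k).choose t * (n + t - 1).choose k := by
  by_cases hkn : k = n
  · subst hkn
    rw [Nat.choose_self, Nat.choose_eq_zero_of_lt (by omega : k - 1 < k), mul_zero,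
      add_zero, mul_one]
    have h1 : k + t - k = t := by omega
    rw [h1, Nat.choose_self, one_mul]
  · have hlt : k < n := lt_of_le_of_ne hk hkn
    have h1 : (n + t - 1).choose n * n.choose k
        = (n + t - 1).choose k * (n + t - 1 - k).choose (n - k) :=
      Nat.choose_mul hk
    have h2 : (n + t - 1).choose (n - 1) * (n - 1).choose k
        = (n + t - 1).choose k * (n + t - 1 - k).choose (n - 1 - k) :=
      Nat.choose_mul (by omega)
    rw [h1, h2, ← Nat.mul_add]
    have h3 : (n + t - 1 - k).choose (n - k) + (n + t - 1 - k).choose (n - 1 - k)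
        = (n + t - k).choose (n - k) := by
      have e1 : n + t - k = (n + t - 1 - k) + 1 := by omega
      have e2 : n - k = (n - 1 - k) + 1 := by omega
      rw [e1, e2, Nat.choose_succ_succ, Nat.add_comm]
    rw [h3]
    have h4 : (n + t - k).choose (n - k) = (n + t - k).choose t := by
      have := Nat.choose_symm (by omega : t ≤ n + t - k)
      rwa [show n + t - k - t = n - k by omega] at this
    rw [h4, Nat.mul_comm]

theorem binomial_identity (n k t : ℤ) (hn : 0 ≤ n) (hk : 0 ≤ k) (ht : 0 ≤ t)
    (hkn : k ≤ n) :
    intChoose (n + t - 1) n * intChoose n k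
      + intChoose (n + t - 1) (n - 1) * intChoose (n - 1) k
    = intChoose (n + t - k) t * intChoose (n + t - 1) k := by
  lift n to ℕ using hn with N
  lift k to ℕ using hk with K
  lift t to ℕ using ht with T
  have hKN : K ≤ N := by exact_mod_cast hkn
  rcases Nat.eq_zero_or_pos N with rfl | hN
  · -- N = 0, hence K = 0
    have hK0 : K = 0 := by omega
    subst hK0
    simp only [Nat.cast_zero, zero_add, sub_zero]
    rcases Nat.eq_zero_or_pos T with rfl | hT
    · simp only [Nat.cast_zero]
      rw [intChoose_of_not (a := 0 - 1) (b := 0) (by omega)]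
      ring
    · have h1 : intChoose ((T:ℤ) - 1) 0 = (((T:ℤ) - 1).toNat.choose 0 : ℤ) :=
        intChoose_of_le le_rfl (by omega)
      have h2 : intChoose ((T:ℤ) - 1) (0 - 1) = 0 := by
        apply intChoose_of_not; omega
      have h3 : intChoose (T:ℤ) (T:ℤ) = 1 := by
        rw [intChoose_of_le (by positivity) le_rfl]; simp
      have h4 : intChoose (0:ℤ) (0:ℤ) = 1 := by
        rw [intChoose_of_le le_rfl le_rfl]; simp
      rw [h1, h2, h3, h4]
      simp
  · rcases Nat.eq_zero_or_pos T with rfl | hT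
    · -- T = 0
      simp only [Nat.cast_zero, add_zero, sub_zero]
      have h1 : intChoose ((N:ℤ) - 1) N = 0 := by
        apply intChoose_of_not; omega
      have h2 : intChoose ((N:ℤ) - 1) ((N:ℤ) - 1) = 1 := by
        rw [intChoose_of_le (by omega) le_rfl]; simp
      have h3 : intChoose ((N:ℤ) - K) (0:ℤ) = 1 := by
        rw [intChoose_of_le le_rfl (by omega)]; simp
      rw [h1, h2, h3]; ring
    · -- main case: N ≥ 1, T ≥ 1
      have key := nat_binomial_identity N K T hKN hN hT
      have c1 : intChoose ((N:ℤ) + T - 1) N = ((N + T - 1).choose N : ℤ) := by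
        rw [intChoose_of_le (by positivity) (by omega)]
        congr 2 <;> omega
      have c2 : intChoose ((N:ℤ)) K = (N.choose K : ℤ) := by
        rw [intChoose_of_le (by positivity) (by exact_mod_cast hKN)]
        congr 2 <;> simp
      have c3 : intChoose ((N:ℤ) + T - 1) ((N:ℤ) - 1) = ((N + T - 1).choose (N - 1) : ℤ) := by
        rw [intChoose_of_le (by omega) (by omega)]
        congr 2 <;> omega
      have c4 : intChoose ((N:ℤ) - 1) K = ((N - 1).choose K : ℤ) := by
        by_cases hK : K = N
        · subst hK
          rw [intChoose_of_not (by omega), Nat.choose_eq_zero_of_lt (by omega)]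
          simp
        · rw [intChoose_of_le (by positivity) (by omega)]
          congr 2 <;> omega
      have c5 : intChoose ((N:ℤ) + T - K) T = ((N + T - K).choose T : ℤ) := by
        rw [intChoose_of_le (by positivity) (by omega)]
        congr 2 <;> omega
      have c6 : intChoose ((N:ℤ) + T - 1) K = ((N + T - 1).choose K : ℤ) := by
        rw [intChoose_of_le (by positivity) (by omega)]
        congr 2 <;> omega
      rw [c1, c2, c3, c4, c5, c6]
      exact_mod_cast key
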